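/- Let g : ℝ → ℝ be locally Lipschitz with g(s) ≥ 0 for all s ≥ 0, let s ≥ 0, and let ρ : [0,∞) → ℝ be differentiable with ρ'(τ) = -2 g(ρ(τ)) ρ(τ) for all τ ≥ 0 and ρ(0) = s. Then 0 ≤ ρ(τ) ≤ s for all τ ≥ 0, and ρ is monotonically nonincreasing on [0,∞). -/
import Mathlib


open Set

/-- The ODE ρ' = -2 g(ρ) ρ governing the local density in the nonlinear/damping
split step: for nonnegative damping `g`, the density stays in `[0, s]` and is
nonincreasing on `[0, ∞)`. -/
theorem stmt2 (g : ℝ → ℝ) (hg : LocallyLipschitz g) (hg0 : ∀ s : ℝ, 0 ≤ s → 0 ≤ g s)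
    (s : ℝ) (hs : 0 ≤ s) (ρ : ℝ → ℝ)
    (hODE : ∀ τ : ℝ, 0 ≤ τ → HasDerivAt ρ (-2 * g (ρ τ) * ρ τ) τ)
    (h0 : ρ 0 = s) :
    (∀ τ : ℝ, 0 ≤ τ → 0 ≤ ρ τ ∧ ρ τ ≤ s) ∧ AntitoneOn ρ (Set.Ici 0) := by
  have hcontAt : ∀ τ : ℝ, 0 ≤ τ → ContinuousAt ρ τ := fun τ hτ =>
    (hODE τ hτ).continuousAt
  have hcont : ContinuousOn ρ (Ici 0) := fun τ hτ =>
    (hcontAt τ hτ).continuousWithinAt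
  -- Nonnegativity
  have hpos : ∀ T : ℝ, 0 ≤ T → 0 ≤ ρ T := by
    intro T hT
    by_contra hneg
    push_neg at hneg
    set A : Set ℝ := {τ | τ ∈ Icc 0 T ∧ 0 ≤ ρ τ} with hA
    have h0A : (0 : ℝ) ∈ A := ⟨⟨le_refl 0, hT⟩, by rw [h0]; exact hs⟩
    have hAsub : A ⊆ Icc 0 T := fun x hx => hx.1
    have hAbdd : BddAbove A := BddAbove.mono hAsub (bddAbove_Icc)
    have hAne : A.Nonempty := ⟨0, h0A⟩
    have hAclosed : IsClosed A := by
      have : A = Icc 0 T ∩ ρ ⁻¹' (Ici 0) := by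
        ext x; simp [hA, and_assoc, mem_Icc]
      rw [this]
      exact ContinuousOn.preimage_isClosed_of_isClosed
        (hcont.mono (Icc_subset_Ici_self)) isClosed_Icc isClosed_Ici
    set t0 := sSup A with ht0
    have ht0A : t0 ∈ A := hAclosed.csSup_mem hAne hAbdd
    have ht00 : 0 ≤ t0 := ht0A.1.1
    have ht0T : t0 ≤ T := ht0A.1.2
    have hρt0 : ρ t0 = 0 := by
      rcases lt_or_eq_of_le ht0A.2 with hlt | heq
      · -- ρ t0 > 0: contradiction, since ρ stays positive just after t0
        exfalso
        have ht0lt : t0 < T := by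
          rcases eq_or_lt_of_le ht0T with h | h
          · exact absurd (h ▸ hlt) (not_lt.mpr hneg.le)
          · exact h
        have : ∀ᶠ x in nhds t0, 0 < ρ x :=
          (hcontAt t0 ht00).eventually (eventually_gt_nhds hlt)
        rcases Metric.eventually_nhds_iff.mp this with ⟨ε, hε, hball⟩
        set x := min (t0 + ε / 2) T with hx
        have hxt0 : t0 < x := lt_min (by linarith) ht0lt
        have hxd : dist x t0 < ε := by
          rw [Real.dist_eq, abs_of_nonneg (by simp [hx]; constructor <;> linarith)]
          have : x ≤ t0 + ε / 2 := min_le_left _ _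
          linarith
        have hxA : x ∈ A := ⟨⟨by linarith, min_le_right _ _⟩, (hball hxd).le⟩
        exact absurd (le_csSup hAbdd hxA) (not_le.mpr hxt0)
      · exact heq.symm
    -- Grönwall on [t0, T]
    obtain ⟨C, hC⟩ : ∃ C, ∀ x ∈ Icc t0 T, ‖g (ρ x)‖ ≤ C :=
      (isCompact_Icc).exists_bound_of_continuousOn
        (hg.continuous.comp_continuousOn
          (hcont.mono (fun x hx => le_trans ht00 hx.1)))
    have key := norm_le_gronwallBound_of_norm_deriv_right_le
      (f := ρ) (f' := fun τ => -2 * g (ρ τ) * ρ τ) (δ := 0) (K := 2 * C) (ε := 0)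
      (a := t0) (b := T)
      (hcont.mono (fun x hx => le_trans ht00 hx.1))
      (fun x hx => ((hODE x (le_trans ht00 hx.1)).hasDerivWithinAt))
      (by rw [hρt0]; simp)
      (by
        intro x hx
        have hx' : x ∈ Icc t0 T := ⟨hx.1, hx.2.le⟩
        have := hC x hx'
        rw [norm_mul, norm_mul]
        have h2 : ‖(-2 : ℝ)‖ = 2 := by norm_num
        rw [h2, add_zero, mul_assoc]
        have hn : (0:ℝ) ≤ ‖ρ x‖ := norm_nonneg _
        have hgn : (0:ℝ) ≤ ‖g (ρ x)‖ := norm_nonneg _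
        nlinarith)
    have hTmem : T ∈ Icc t0 T := ⟨ht0T, le_refl T⟩
    have := key T hTmem
    rw [gronwallBound_ε0_δ0] at this
    have : ρ T = 0 := norm_le_zero_iff.mp this
    linarith
  -- Antitone
  have hanti : AntitoneOn ρ (Ici 0) := by
    apply antitoneOn_of_deriv_nonpos (convex_Ici 0) hcont
    · intro x hx
      rw [interior_Ici] at hx
      exact ((hODE x (le_of_lt hx)).differentiableAt).differentiableWithinAt
    · intro x hx
      rw [interior_Ici] at hx
      rw [(hODE x hx.le).deriv]
      have h1 : 0 ≤ ρ x := hpos x hx.le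
      have h2 : 0 ≤ g (ρ x) := hg0 _ h1
      nlinarith
  refine ⟨fun τ hτ => ⟨hpos τ hτ, ?_⟩, hanti⟩
  have := hanti (self_mem_Ici) hτ hτ
  rwa [h0] at this
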